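/- Let $A \in GL(d,\mathbb{R})$ be a matrix all of whose eigenvalues have modulus strictly greater than $1$. Then there exists an ellipsoid $\Delta = Q^{-1}(B(0,1))$ for some $Q \in GL(d,\mathbb{R})$ such that $\Delta \subset A(\Delta)$. -/

import Mathlib

open Matrix Filter Finset
open scoped ENNReal NNReal

attribute [local instance] Matrix.linftyOpNormedRing Matrix.linftyOpNormedAlgebra
  Matrix.linftyOpNormedAddCommGroup

/-- Entrywise bound by the `l∞` operator norm. -/
lemma aux_entry_le {d : ℕ} (M : Matrix (Fin d) (Fin d) ℂ) (i j : Fin d) :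
    ‖M i j‖₊ ≤ ‖M‖₊ := by
  rw [Matrix.linfty_opNNNorm_def]
  exact le_trans
    (Finset.single_le_sum (f := fun k => ‖M i k‖₊) (fun k _ => zero_le) (Finset.mem_univ j))
    (Finset.le_sup (f := fun i => ∑ k, ‖M i k‖₊) (Finset.mem_univ i))

/-- If the spectrum of a complex matrix lies strictly inside the unit disc, then some
positive power of it has small norm. -/
lemma aux_pow_small {d : ℕ} (M : Matrix (Fin d) (Fin d) ℂ)
    (h : ∀ z ∈ spectrum ℂ M, ‖z‖₊ < 1) (ε : ℝ≥0) (hε : 0 < ε) :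
    ∃ n : ℕ, 0 < n ∧ ‖M ^ n‖₊ < ε := by
  haveI : CompleteSpace (Matrix (Fin d) (Fin d) ℂ) := FiniteDimensional.complete ℂ _
  have hρ : spectralRadius ℂ M < 1 := by
    rcases isEmpty_or_nonempty (Fin d) with hd | hd
    · rw [spectrum.SpectralRadius.of_subsingleton]
      exact zero_lt_one
    · haveI : Nontrivial (Matrix (Fin d) (Fin d) ℂ) := inferInstance
      exact_mod_cast spectrum.spectralRadius_lt_of_forall_lt M h
  obtain ⟨r, hρr, hr1⟩ := exists_between hρ
  have hT := spectrum.pow_nnnorm_pow_one_div_tendsto_nhds_spectralRadius M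
  have hev1 : ∀ᶠ n : ℕ in atTop, (‖M ^ n‖₊ : ℝ≥0∞) ^ (1 / n : ℝ) < r :=
    hT.eventually_lt_const hρr
  have hr0 : r ≠ ⊤ := hr1.trans_le le_top |>.ne
  have hev2 : ∀ᶠ n : ℕ in atTop, r ^ n < (ε : ℝ≥0∞) := by
    have := (ENNReal.tendsto_pow_atTop_nhds_zero_of_lt_one hr1).eventually_lt_const
      (by exact_mod_cast hε : (0 : ℝ≥0∞) < (ε : ℝ≥0∞))
    exact this
  have hev3 : ∀ᶠ n : ℕ in atTop, 0 < n := eventually_gt_atTop 0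
  obtain ⟨n, h1, h2, h3⟩ := (hev1.and (hev2.and hev3)).exists
  refine ⟨n, h3, ?_⟩
  have hn : (n : ℝ) ≠ 0 := Nat.cast_ne_zero.mpr h3.ne'
  have key : (‖M ^ n‖₊ : ℝ≥0∞) = ((‖M ^ n‖₊ : ℝ≥0∞) ^ (1 / n : ℝ)) ^ n := by
    rw [← ENNReal.rpow_natCast _ n, ← ENNReal.rpow_mul, one_div, inv_mul_cancel₀ hn,
      ENNReal.rpow_one]
  have : (‖M ^ n‖₊ : ℝ≥0∞) < (ε : ℝ≥0∞) := by
    calc (‖M ^ n‖₊ : ℝ≥0∞) = ((‖M ^ n‖₊ : ℝ≥0∞) ^ (1 / n : ℝ)) ^ n := key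
    _ ≤ r ^ n := pow_le_pow_left' h1.le n
    _ < (ε : ℝ≥0∞) := h2
  exact_mod_cast this

/-- Distributing a dot product over a sum of matrices. -/
lemma aux_dot_sum_mulVec {d : ℕ} (s : Finset ℕ) (M : ℕ → Matrix (Fin d) (Fin d) ℝ)
    (x : Fin d → ℝ) :
    x ⬝ᵥ ((∑ k ∈ s, M k) *ᵥ x) = ∑ k ∈ s, x ⬝ᵥ (M k *ᵥ x) := by
  classical
  induction s using Finset.induction_on with
  | empty => simp [Matrix.zero_mulVec]
  | insert _ _ h ih =>
      rw [Finset.sum_insert h, Finset.sum_insert h, Matrix.add_mulVec,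
        dotProduct_add, ih]

/-- The open Euclidean unit ball in `ℝᵈ`. -/
def eucBall (d : ℕ) : Set (Fin d → ℝ) := {x | ∑ i, x i ^ 2 < 1}

/-- If all eigenvalues of `A ∈ GL(d, ℝ)` have modulus strictly greater than `1`, then there
is an ellipsoid `Δ = Q⁻¹(B(0,1))`, for some `Q ∈ GL(d, ℝ)`, with `Δ ⊂ A(Δ)`. -/
theorem stmt_5 (d : ℕ) (A : Matrix (Fin d) (Fin d) ℝ) (hA : IsUnit A.det)
    (hspec : ∀ z ∈ spectrum ℂ (A.map (Complex.ofReal)), 1 < ‖z‖) :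
    ∃ Q : Matrix (Fin d) (Fin d) ℝ, IsUnit Q.det ∧
      Q⁻¹.mulVec '' eucBall d ⊆ A.mulVec '' (Q⁻¹.mulVec '' eucBall d) := by
  classical
  rcases Nat.eq_zero_or_pos d with rfl | hd
  · refine ⟨1, by simp, ?_⟩
    rintro v -
    refine ⟨(1 : Matrix (Fin 0) (Fin 0) ℝ)⁻¹.mulVec v, ⟨v, by simp [eucBall], rfl⟩,
      Subsingleton.elim _ _⟩
  -- Complexify
  set f : ℝ →+* ℂ := Complex.ofRealHom with hf
  have hmulAB : A * A⁻¹ = 1 := Matrix.mul_nonsing_inv A hA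
  have hmulBA : A⁻¹ * A = 1 := Matrix.nonsing_inv_mul A hA
  set Ac : Matrix (Fin d) (Fin d) ℂ := A.map Complex.ofReal with hAc
  set Bc : Matrix (Fin d) (Fin d) ℂ := A⁻¹.map Complex.ofReal with hBc
  have hcoe : (Complex.ofReal : ℝ → ℂ) = ⇑f := rfl
  have hABc : Ac * Bc = 1 := by
    rw [hAc, hBc, hcoe, ← Matrix.map_mul (f := f), hmulAB]
    exact Matrix.map_one _ f.map_zero f.map_one
  have hdetAc : IsUnit Ac.det := by
    rw [hAc, hcoe]
    show IsUnit (f.mapMatrix A).det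
    rw [← RingHom.map_det]
    exact hA.map f
  have hAcUnit : IsUnit Ac := (Matrix.isUnit_iff_isUnit_det Ac).2 hdetAc
  obtain ⟨u, hu⟩ := hAcUnit
  have huinv : (↑u⁻¹ : Matrix (Fin d) (Fin d) ℂ) = Bc := by
    have : (↑u : Matrix (Fin d) (Fin d) ℂ) * Bc = 1 := by rw [hu]; exact hABc
    calc (↑u⁻¹ : Matrix (Fin d) (Fin d) ℂ)
        = ↑u⁻¹ * (↑u * Bc) := by rw [this, mul_one]
      _ = (↑u⁻¹ * ↑u) * Bc := by rw [mul_assoc]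
      _ = Bc := by rw [← Units.val_mul, inv_mul_cancel, Units.val_one, one_mul]
  -- spectrum of `Bc` lies in the open unit disc
  have hspecB : ∀ z ∈ spectrum ℂ Bc, ‖z‖₊ < 1 := by
    intro z hz
    have hz0 : z ≠ 0 := by
      rintro rfl
      rw [← huinv] at hz
      exact spectrum.zero_notMem ℂ u⁻¹.isUnit hz
    have hzinv : z⁻¹ ∈ spectrum ℂ Ac := by
      rw [← huinv] at hz
      have := (spectrum.inv_mem_iff (r := Units.mk0 z hz0) (a := u⁻¹)).mp hz
      simpa [hu] using this
    have h1 : 1 < ‖z⁻¹‖ := hspec _ hzinv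
    rw [norm_inv] at h1
    have : ‖z‖ < 1 := by
      have habs : 0 < ‖z‖ := norm_pos_iff.mpr hz0
      rw [lt_inv_comm₀ one_pos habs] at h1
      simpa using h1
    have : ‖z‖ < 1 := by simpa using this
    exact_mod_cast this
  -- find a power with small norm
  have hdpos : (0 : ℝ≥0) < ((d : ℝ≥0))⁻¹ := by positivity
  obtain ⟨n, hn, hnorm⟩ := aux_pow_small Bc hspecB _ hdpos
  -- translate to an entrywise bound on the real matrix `A⁻¹ ^ n`
  have hpowmap : (A⁻¹ ^ n).map Complex.ofReal = Bc ^ n := by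
    have : (A⁻¹ ^ n).map Complex.ofReal = f.mapMatrix (A⁻¹ ^ n) := rfl
    rw [this, map_pow]
    rfl
  have hentry : ∀ i j, |(A⁻¹ ^ n) i j| ≤ ((d : ℝ))⁻¹ := by
    intro i j
    have h1 : ‖(Bc ^ n) i j‖₊ ≤ ‖Bc ^ n‖₊ := aux_entry_le _ i j
    have h2 : ‖(Bc ^ n) i j‖₊ < ((d : ℝ≥0))⁻¹ := lt_of_le_of_lt h1 hnorm
    have h3 : ‖(Bc ^ n) i j‖ ≤ ((d : ℝ≥0))⁻¹ := le_of_lt h2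
    have h4 : (Bc ^ n) i j = Complex.ofReal ((A⁻¹ ^ n) i j) := by
      rw [← hpowmap]; rfl
    rw [h4, Complex.norm_real, Real.norm_eq_abs] at h3
    simpa using h3
  -- the contraction estimate for `A⁻¹ ^ n` in the Euclidean quadratic form
  have hsmall : ∀ x : Fin d → ℝ,
      ((A⁻¹ ^ n) *ᵥ x) ⬝ᵥ ((A⁻¹ ^ n) *ᵥ x) ≤ x ⬝ᵥ x := by
    intro x
    have hx2 : (0:ℝ) ≤ ∑ j, x j ^ 2 := Finset.sum_nonneg fun j _ => sq_nonneg _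
    have step : ∀ i : Fin d, ((A⁻¹ ^ n) *ᵥ x) i ^ 2
        ≤ (∑ j, ((A⁻¹ ^ n) i j) ^ 2) * ∑ j, x j ^ 2 := by
      intro i
      have cs := Finset.sum_mul_sq_le_sq_mul_sq Finset.univ
        (fun j => (A⁻¹ ^ n) i j) (fun j => x j)
      simpa [Matrix.mulVec, dotProduct, sq] using cs
    have hrow : ∀ i : Fin d, (∑ j, ((A⁻¹ ^ n) i j) ^ 2) ≤ d * (((d:ℝ))⁻¹)^2 := by
      intro i
      calc ∑ j, ((A⁻¹ ^ n) i j) ^ 2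
          ≤ ∑ _j : Fin d, (((d:ℝ))⁻¹)^2 := by
            refine Finset.sum_le_sum fun j _ => ?_
            have := hentry i j
            calc ((A⁻¹ ^ n) i j) ^ 2 = |(A⁻¹ ^ n) i j| ^ 2 := (sq_abs _).symm
            _ ≤ (((d:ℝ))⁻¹)^2 := by
                  exact pow_le_pow_left₀ (abs_nonneg _) this 2
        _ = d * (((d:ℝ))⁻¹)^2 := by simp [Finset.sum_const, nsmul_eq_mul]
    have hd' : (0:ℝ) < d := by exact_mod_cast hd
    have hfac : (d:ℝ) * ((d:ℝ) * (((d:ℝ))⁻¹)^2) = 1 := by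
      field_simp
    calc ((A⁻¹ ^ n) *ᵥ x) ⬝ᵥ ((A⁻¹ ^ n) *ᵥ x)
        = ∑ i, ((A⁻¹ ^ n) *ᵥ x) i ^ 2 := by simp [dotProduct, sq]
      _ ≤ ∑ _i : Fin d, (d * (((d:ℝ))⁻¹)^2) * ∑ j, x j ^ 2 := by
          refine Finset.sum_le_sum fun i _ => ?_
          exact le_trans (step i) (mul_le_mul_of_nonneg_right (hrow i) hx2)
      _ = ((d:ℝ) * ((d:ℝ) * (((d:ℝ))⁻¹)^2)) * ∑ j, x j ^ 2 := by
          simp [Finset.sum_const, nsmul_eq_mul]; ring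
      _ = ∑ j, x j ^ 2 := by rw [hfac, one_mul]
      _ = x ⬝ᵥ x := by simp [dotProduct, sq]
  -- the Lyapunov quadratic form
  set P : Matrix (Fin d) (Fin d) ℝ :=
    ∑ k ∈ Finset.range n, ((A⁻¹ ^ k)ᵀ * (A⁻¹ ^ k)) with hP
  have hquad : ∀ x : Fin d → ℝ,
      x ⬝ᵥ (P *ᵥ x) = ∑ k ∈ Finset.range n, ((A⁻¹ ^ k) *ᵥ x) ⬝ᵥ ((A⁻¹ ^ k) *ᵥ x) := by
    intro x
    rw [hP, aux_dot_sum_mulVec]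
    refine Finset.sum_congr rfl fun k _ => ?_
    rw [← Matrix.mulVec_mulVec, Matrix.dotProduct_mulVec, Matrix.vecMul_transpose]
  have hPsymm : Pᵀ = P := by
    rw [hP, Matrix.transpose_sum]
    refine Finset.sum_congr rfl fun k _ => ?_
    rw [Matrix.transpose_mul, Matrix.transpose_transpose]
  have hstar : ∀ x : Fin d → ℝ, star x = x := fun x => funext fun i => star_trivial _
  have hdotpos : ∀ x : Fin d → ℝ, x ≠ 0 → 0 < x ⬝ᵥ x := by
    intro x hx
    have h1 : 0 ≤ x ⬝ᵥ x := Finset.sum_nonneg fun i _ => mul_self_nonneg _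
    have h2 : x ⬝ᵥ x ≠ 0 := fun h => hx ((dotProduct_self_eq_zero).mp h)
    exact lt_of_le_of_ne h1 (Ne.symm h2)
  have hPposdef : P.PosDef := by
    rw [Matrix.posDef_iff_dotProduct_mulVec]
    constructor
    · rw [Matrix.IsHermitian, Matrix.conjTranspose_eq_transpose_of_trivial]
      exact hPsymm
    · intro x hx
      rw [hstar x, hquad x]
      have h0 : 0 < ((A⁻¹ ^ 0) *ᵥ x) ⬝ᵥ ((A⁻¹ ^ 0) *ᵥ x) := by
        simpa using hdotpos x hx
      refine lt_of_lt_of_le h0 ?_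
      refine Finset.single_le_sum (f := fun k => ((A⁻¹ ^ k) *ᵥ x) ⬝ᵥ ((A⁻¹ ^ k) *ᵥ x))
        (fun k _ => ?_) (Finset.mem_range.mpr hn)
      exact Finset.sum_nonneg fun i _ => mul_self_nonneg _
  -- the contraction property of the quadratic form
  have hcontr : ∀ x : Fin d → ℝ,
      (A⁻¹ *ᵥ x) ⬝ᵥ (P *ᵥ (A⁻¹ *ᵥ x)) ≤ x ⬝ᵥ (P *ᵥ x) := by
    intro x
    rw [hquad, hquad]
    have hterm : ∀ k, ((A⁻¹ ^ k) *ᵥ (A⁻¹ *ᵥ x)) ⬝ᵥ ((A⁻¹ ^ k) *ᵥ (A⁻¹ *ᵥ x))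
        = ((A⁻¹ ^ (k+1)) *ᵥ x) ⬝ᵥ ((A⁻¹ ^ (k+1)) *ᵥ x) := by
      intro k
      rw [Matrix.mulVec_mulVec, ← pow_succ]
    simp_rw [hterm]
    set g : ℕ → ℝ := fun k => ((A⁻¹ ^ k) *ᵥ x) ⬝ᵥ ((A⁻¹ ^ k) *ᵥ x) with hg
    have e1 : ∑ k ∈ Finset.range (n+1), g k = (∑ k ∈ Finset.range n, g (k+1)) + g 0 :=
      Finset.sum_range_succ' g n
    have e2 : ∑ k ∈ Finset.range (n+1), g k = (∑ k ∈ Finset.range n, g k) + g n :=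
      Finset.sum_range_succ g n
    have hgn : g n ≤ g 0 := by
      have := hsmall x
      simpa [hg] using this
    have : (∑ k ∈ Finset.range n, g (k+1)) + g 0 = (∑ k ∈ Finset.range n, g k) + g n := by
      rw [← e1, e2]
    linarith
  -- take the square root of `P`
  have hPsd := hPposdef.posSemidef
  set Q : Matrix (Fin d) (Fin d) ℝ := (by open scoped MatrixOrder in exact CFC.sqrt P) with hQ
  have hQQ : Q * Q = P := by open scoped MatrixOrder in exact CFC.sqrt_mul_sqrt_self P hPsd.nonneg
  have hQsymm : Qᵀ = Q := by
    have := (by open scoped MatrixOrder in exact (CFC.sqrt_nonneg P).posSemidef.1 : Q.IsHermitian)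
    rwa [Matrix.IsHermitian, Matrix.conjTranspose_eq_transpose_of_trivial] at this
  have hQdet : IsUnit Q.det := by
    have hdetP : 0 < P.det := hPposdef.det_pos
    have : Q.det * Q.det = P.det := by rw [← Matrix.det_mul, hQQ]
    have hne : Q.det ≠ 0 := by
      intro h
      rw [h, mul_zero] at this
      exact hdetP.ne' this.symm
    exact isUnit_iff_ne_zero.mpr hne
  have hQmul : Q * Q⁻¹ = 1 := Matrix.mul_nonsing_inv Q hQdet
  have hQmul' : Q⁻¹ * Q = 1 := Matrix.nonsing_inv_mul Q hQdet
  -- the key identity `‖Q y‖² = y ⬝ᵥ P y`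
  have hkey : ∀ y : Fin d → ℝ, (Q *ᵥ y) ⬝ᵥ (Q *ᵥ y) = y ⬝ᵥ (P *ᵥ y) := by
    intro y
    have h1 : y ᵥ* Q = Q *ᵥ y := by
      conv_lhs => rw [← hQsymm]
      rw [Matrix.vecMul_transpose]
    rw [← hQQ, ← Matrix.mulVec_mulVec, Matrix.dotProduct_mulVec y Q (Q *ᵥ y), h1]
  refine ⟨Q, hQdet, ?_⟩
  rintro v ⟨w, hw, rfl⟩
  set y : Fin d → ℝ := Q⁻¹ *ᵥ w with hy
  refine ⟨Q⁻¹ *ᵥ (Q *ᵥ (A⁻¹ *ᵥ y)), ⟨Q *ᵥ (A⁻¹ *ᵥ y), ?_, rfl⟩, ?_⟩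
  · -- membership in the ball
    have hQy : Q *ᵥ y = w := by
      rw [hy, Matrix.mulVec_mulVec, hQmul, Matrix.one_mulVec]
    have hle : (Q *ᵥ (A⁻¹ *ᵥ y)) ⬝ᵥ (Q *ᵥ (A⁻¹ *ᵥ y)) ≤ w ⬝ᵥ w := by
      calc (Q *ᵥ (A⁻¹ *ᵥ y)) ⬝ᵥ (Q *ᵥ (A⁻¹ *ᵥ y))
          = (A⁻¹ *ᵥ y) ⬝ᵥ (P *ᵥ (A⁻¹ *ᵥ y)) := hkey _
        _ ≤ y ⬝ᵥ (P *ᵥ y) := hcontr y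
        _ = (Q *ᵥ y) ⬝ᵥ (Q *ᵥ y) := (hkey y).symm
        _ = w ⬝ᵥ w := by rw [hQy]
    have hww : w ⬝ᵥ w < 1 := by
      have : ∑ i, w i ^ 2 < 1 := hw
      simpa [dotProduct, sq] using this
    show ∑ i, (Q *ᵥ (A⁻¹ *ᵥ y)) i ^ 2 < 1
    have : (Q *ᵥ (A⁻¹ *ᵥ y)) ⬝ᵥ (Q *ᵥ (A⁻¹ *ᵥ y)) < 1 := lt_of_le_of_lt hle hww
    simpa [dotProduct, sq] using this
  · -- the image equation
    have h2 : Q⁻¹ *ᵥ (Q *ᵥ (A⁻¹ *ᵥ y)) = A⁻¹ *ᵥ y := by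
      rw [Matrix.mulVec_mulVec, hQmul', Matrix.one_mulVec]
    rw [h2, Matrix.mulVec_mulVec, hmulAB, Matrix.one_mulVec]
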